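/- The double series-integral identity ∑_{k=2}^{∞} ∫_{0}^{∞} sinh³(y/2)/(sinh(ky/2) · sinh((k+1)y/2)) dy = ln 2 − 1/2 holds. -/

import Mathlib

open MeasureTheory Real Filter Topology

namespace SinhSumAux

/-- The pointwise sum of the telescoping series. -/
noncomputable def E (y : ℝ) : ℝ := exp (-y) * (1 - exp (-y)) / (2 * (1 + exp (-y)))

/-- An antiderivative of `E`. -/
noncomputable def Phi (y : ℝ) : ℝ := exp (-y) / 2 - Real.log (1 + exp (-y))

lemma one_add_exp_pos (y : ℝ) : 0 < 1 + exp (-y) := by positivity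

lemma hasDerivAt_Phi (y : ℝ) : HasDerivAt Phi (E y) y := by
  have h1 : HasDerivAt (fun y : ℝ => exp (-y)) (-exp (-y)) y := by
    simpa [Function.comp_def] using (Real.hasDerivAt_exp (-y)).comp y (hasDerivAt_neg y)
  have h2 : HasDerivAt (fun y : ℝ => 1 + exp (-y)) (-exp (-y)) y := by
    exact h1.const_add 1
  have h3 := h2.log (one_add_exp_pos y).ne'
  have h4 := (h1.div_const 2).sub h3
  refine h4.congr_deriv ?_
  have h5 := (one_add_exp_pos y).ne'
  unfold E
  field_simp
  ring

lemma tendsto_Phi : Tendsto Phi atTop (𝓝 0) := by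
  have h0 : Tendsto (fun y : ℝ => exp (-y)) atTop (𝓝 0) := tendsto_exp_neg_atTop_nhds_zero
  have h := (h0.div_const 2).sub
    (((Real.continuousAt_log (by norm_num : (1:ℝ)+0 ≠ 0)).tendsto).comp
      (tendsto_const_nhds.add h0))
  simp at h; exact h

lemma E_nonneg {y : ℝ} (hy : 0 < y) : 0 ≤ E y := by
  have h1 : exp (-y) ≤ 1 := by
    rw [Real.exp_le_one_iff]; linarith
  have h2 : 0 < exp (-y) := Real.exp_pos _
  have h3 := one_add_exp_pos y
  unfold E
  apply div_nonneg
  · nlinarith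
  · positivity

lemma E_integrableOn : IntegrableOn E (Set.Ioi (0:ℝ)) :=
  integrableOn_Ioi_deriv_of_nonneg (hasDerivAt_Phi 0).continuousAt.continuousWithinAt
    (fun x _ => hasDerivAt_Phi x) (fun _ hx => E_nonneg hx) tendsto_Phi

lemma E_integral : ∫ y in Set.Ioi (0:ℝ), E y = Real.log 2 - 1/2 := by
  have h := integral_Ioi_of_hasDerivAt_of_nonneg (hasDerivAt_Phi 0).continuousAt.continuousWithinAt
    (fun x _ => hasDerivAt_Phi x) (fun _ hx => E_nonneg hx) tendsto_Phi
  rw [h]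
  unfold Phi
  norm_num

lemma F_nonneg (n : ℕ) {y : ℝ} (hy : 0 < y) :
    0 ≤ sinh (y/2)^3 / (sinh (((n:ℝ)+2)*y/2) * sinh (((n:ℝ)+3)*y/2)) := by
  have hn := Nat.cast_nonneg (α:=ℝ) n
  have h1 : 0 < sinh (((n:ℝ)+2)*y/2) := Real.sinh_pos_iff.2 (by nlinarith)
  have h2 : 0 < sinh (((n:ℝ)+3)*y/2) := Real.sinh_pos_iff.2 (by nlinarith)
  have h3 : 0 < sinh (y/2) := Real.sinh_pos_iff.2 (by linarith)
  positivity

lemma key_hasSum {y : ℝ} (hy : 0 < y) :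
    HasSum (fun n : ℕ => sinh (y/2)^3 / (sinh (((n:ℝ)+2)*y/2) * sinh (((n:ℝ)+3)*y/2))) (E y) := by
  set g : ℕ → ℝ := fun n => cosh (((n:ℝ)+2)*y/2) / sinh (((n:ℝ)+2)*y/2) with hg
  have hsp : ∀ c : ℝ, 2 ≤ c → 0 < sinh (c*y/2) := fun c hc =>
    Real.sinh_pos_iff.2 (by nlinarith)
  -- each term is a telescoping difference
  have hterm : ∀ n : ℕ, sinh (y/2)^3 / (sinh (((n:ℝ)+2)*y/2) * sinh (((n:ℝ)+3)*y/2))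
      = sinh (y/2)^2 * (g n - g (n+1)) := by
    intro n
    have hA := hsp ((n:ℝ)+2) (by have := Nat.cast_nonneg (α:=ℝ) n; linarith)
    have hB := hsp ((n:ℝ)+3) (by have := Nat.cast_nonneg (α:=ℝ) n; linarith)
    have hcast : (((n+1:ℕ)):ℝ) + 2 = (n:ℝ)+3 := by push_cast; ring
    have hkey : Real.sinh (y/2) =
        cosh (((n:ℝ)+2)*y/2) * sinh (((n:ℝ)+3)*y/2)
          - sinh (((n:ℝ)+2)*y/2) * cosh (((n:ℝ)+3)*y/2) := by
      rw [show y/2 = ((n:ℝ)+3)*y/2 - ((n:ℝ)+2)*y/2 by ring, Real.sinh_sub]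
      ring
    have hgdiff : g n - g (n+1) = sinh (y/2) / (sinh (((n:ℝ)+2)*y/2) * sinh (((n:ℝ)+3)*y/2)) := by
      simp only [hg, hcast]
      rw [div_sub_div _ _ hA.ne' hB.ne', ← hkey]
    rw [hgdiff]
    ring
  -- partial sums telescope
  have hps : ∀ N : ℕ, ∑ n ∈ Finset.range N,
      sinh (y/2)^3 / (sinh (((n:ℝ)+2)*y/2) * sinh (((n:ℝ)+3)*y/2))
      = sinh (y/2)^2 * (g 0 - g N) := by
    intro N
    simp only [hterm]
    rw [← Finset.mul_sum, Finset.sum_range_sub']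
  -- g tends to 1
  have hgl : Tendsto g atTop (𝓝 1) := by
    have hrw : ∀ n : ℕ, g n = (1 + exp (-(((n:ℝ)+2)*y))) / (1 - exp (-(((n:ℝ)+2)*y))) := by
      intro n
      have ha : (0:ℝ) < ((n:ℝ)+2)*y/2 := by
        have := Nat.cast_nonneg (α:=ℝ) n; nlinarith
      set a := ((n:ℝ)+2)*y/2 with hadef
      have hq1 : exp (-(((n:ℝ)+2)*y)) = exp (-a) * exp (-a) := by
        rw [← Real.exp_add]; congr 1; rw [hadef]; ring
      have hpq : exp a * exp (-a) = 1 := by rw [← Real.exp_add]; simp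
      have hd1 : exp (-a) < exp a := Real.exp_lt_exp.2 (by linarith)
      have hd2 : exp (-(((n:ℝ)+2)*y)) < 1 := by
        rw [Real.exp_lt_one_iff]; nlinarith
      simp only [hg, Real.cosh_eq, Real.sinh_eq, ← hadef]
      have hne2 : 1 - exp (-(((n:ℝ)+2)*y)) ≠ 0 := by linarith
      rw [div_div_div_eq]
      rw [div_eq_div_iff (by nlinarith : (2:ℝ) * (exp a - exp (-a)) ≠ 0) hne2]
      rw [hq1]
      nlinarith [hpq]
    have h0 : Tendsto (fun n : ℕ => exp (-(((n:ℝ)+2)*y))) atTop (𝓝 0) := by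
      apply tendsto_exp_neg_atTop_nhds_zero.comp
      exact Tendsto.atTop_mul_const hy
        (tendsto_atTop_add_const_right _ 2 tendsto_natCast_atTop_atTop)
    rw [funext hrw]
    have := ((tendsto_const_nhds (x := (1:ℝ))).add h0).div
      ((tendsto_const_nhds (x := (1:ℝ))).sub h0) (by norm_num : (1:ℝ) - 0 ≠ 0)
    convert this using 2 <;> norm_num
  -- the limit value equals E y
  have hval : sinh (y/2)^2 * (g 0 - 1) = E y := by
    have hg0 : g 0 = cosh y / sinh y := by
      simp only [hg]; norm_num
    set u := Real.exp (y/2) with hudef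
    set v := Real.exp (-(y/2)) with hvdef
    have huv : u * v = 1 := by rw [hudef, hvdef, ← Real.exp_add]; simp
    have hu0 : 0 < u := Real.exp_pos _
    have hv0 : 0 < v := Real.exp_pos _
    have hey : Real.exp y = u * u := by rw [hudef, ← Real.exp_add]; ring_nf
    have heny : Real.exp (-y) = v * v := by rw [hvdef, ← Real.exp_add]; ring_nf
    have hsinh2 : Real.sinh (y/2) = (u - v)/2 := by
      rw [Real.sinh_eq, hudef, hvdef]
    have hsinh : Real.sinh y = (u*u - v*v)/2 := by rw [Real.sinh_eq, hey, heny]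
    have hcosh : Real.cosh y = (u*u + v*v)/2 := by rw [Real.cosh_eq, hey, heny]
    have hsy : 0 < u*u - v*v := by
      have h := Real.sinh_pos_iff.2 hy
      rw [hsinh] at h; linarith
    have h3 : (0:ℝ) < 1 + v*v := by positivity
    rw [hg0]
    unfold E
    rw [hsinh2, hsinh, hcosh, heny]
    have hne : u^2 - v^2 ≠ 0 := by rw [sq, sq]; exact hsy.ne'
    field_simp
    linear_combination (4*u*v^3 - 4*v^4) * huv
  rw [hasSum_iff_tendsto_nat_of_nonneg (fun n => F_nonneg n hy)]
  rw [funext hps]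
  rw [← hval]
  exact (tendsto_const_nhds.sub hgl).const_mul _

end SinhSumAux

open SinhSumAux

/-- `∑_{k=2}^∞ ∫_0^∞ sinh³(y/2)/(sinh(ky/2)sinh((k+1)y/2)) dy = ln 2 - 1/2`
(the index `k = n + 2` ranges over `n : ℕ`). -/
theorem sum_sinh_integrals_eq_log_two_sub_half :
    HasSum (fun n : ℕ =>
        ∫ y in Set.Ioi (0:ℝ),
          sinh (y/2)^3 / (sinh (((n:ℝ)+2)*y/2) * sinh (((n:ℝ)+3)*y/2)))
      (Real.log 2 - 1/2) := by
  classical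
  set F : ℕ → ℝ → ℝ :=
    fun n y => sinh (y/2)^3 / (sinh (((n:ℝ)+2)*y/2) * sinh (((n:ℝ)+3)*y/2)) with hF
  have hFmeas : ∀ n, Measurable (F n) := by
    intro n
    apply Measurable.div <;> fun_prop
  set μ := volume.restrict (Set.Ioi (0:ℝ)) with hμ
  set L : ℕ → ENNReal := fun n => ∫⁻ y, ENNReal.ofReal (F n y) ∂μ with hL
  have hmemae : ∀ᵐ y ∂μ, y ∈ Set.Ioi (0:ℝ) := ae_restrict_mem measurableSet_Ioi
  have hLsum : ∑' n, L n = ENNReal.ofReal (Real.log 2 - 1/2) := by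
    rw [hL, ← lintegral_tsum (fun n => ((hFmeas n).ennreal_ofReal).aemeasurable)]
    rw [← E_integral, ofReal_integral_eq_lintegral_ofReal E_integrableOn
        (hmemae.mono fun y hy => E_nonneg hy)]
    apply lintegral_congr_ae
    filter_upwards [hmemae] with y hy
    rw [← ENNReal.ofReal_tsum_of_nonneg (fun n => F_nonneg n hy) (key_hasSum hy).summable,
        (key_hasSum hy).tsum_eq]
  have hLne : ∀ n, L n ≠ ⊤ := fun n =>
    ne_top_of_le_ne_top (by rw [hLsum]; exact ENNReal.ofReal_ne_top) (ENNReal.le_tsum n)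
  have hint : ∀ n, (∫ y in Set.Ioi (0:ℝ), F n y) = (L n).toReal := by
    intro n
    rw [integral_eq_lintegral_of_nonneg_ae (hmemae.mono fun y hy => F_nonneg n hy)
      (hFmeas n).aestronglyMeasurable]
  have hsummable : Summable fun n => (L n).toReal :=
    ENNReal.summable_toReal (by rw [hLsum]; exact ENNReal.ofReal_ne_top)
  have h2 : (0:ℝ) ≤ Real.log 2 - 1/2 := by
    have := Real.log_two_gt_d9; linarith
  have htsum : ∑' n, (L n).toReal = Real.log 2 - 1/2 := by
    rw [← ENNReal.tsum_toReal_eq hLne, hLsum, ENNReal.toReal_ofReal h2]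
  have h := hsummable.hasSum
  rw [htsum] at h
  convert h using 1; funext n; exact hint n
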